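/- Let F = {F_1, ..., F_m} be a family of m subsets of [n], and let A be the set of elements contained in at least two members of F, with a = |A| ≥ 1. Then every minimal cover of F that intersects A has size at most m - 1. -/

import Mathlib

/-- A is a cover of the family F if it intersects every member of F. -/
def Cover {n : ℕ} (F : Finset (Finset (Fin n))) (A : Finset (Fin n)) : Prop :=
  ∀ F' ∈ F, (A ∩ F').Nonempty

/-- A is a minimal cover of F if it is a cover but no proper subset of it is. -/
def MinCover {n : ℕ} (F : Finset (Finset (Fin n))) (A : Finset (Fin n)) : Prop :=
  Cover F A ∧ ∀ B ⊂ A, ¬ Cover F B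

/-- Let F be a family of m subsets of [n] and A the set of elements lying in at least
two members of F, with |A| ≥ 1. Then every minimal cover of F meeting A has size at
most m - 1. -/
theorem stmt12 (n m : ℕ) (F : Finset (Finset (Fin n))) (hm : F.card = m)
    (A : Finset (Fin n))
    (hA : A = Finset.univ.filter (fun x => 1 < (F.filter (fun F' => x ∈ F')).card))
    (ha : 1 ≤ A.card)
    (C : Finset (Fin n)) (hC : MinCover F C) (hCA : (C ∩ A).Nonempty) :
    C.card ≤ m - 1 := by
  classical
  -- Every element of the minimal cover has a "private" set.
  have priv : ∀ x ∈ C, ∃ F' ∈ F, C ∩ F' = {x} := by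
    intro x hx
    have hss : C.erase x ⊂ C := Finset.erase_ssubset hx
    have hnc := hC.2 _ hss
    unfold Cover at hnc
    push_neg at hnc
    obtain ⟨F', hF', hempty⟩ := hnc
    refine ⟨F', hF', ?_⟩
    have hne : (C ∩ F').Nonempty := hC.1 F' hF'
    have hkey : ∀ y ∈ C ∩ F', y = x := by
      intro y hy
      by_contra hyx
      have hmem : y ∈ C.erase x ∩ F' := Finset.mem_inter.2 ⟨Finset.mem_erase.2 ⟨hyx,
        (Finset.mem_inter.1 hy).1⟩, (Finset.mem_inter.1 hy).2⟩
      rw [hempty] at hmem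
      simp at hmem
    obtain ⟨y, hy⟩ := hne
    have hxy := hkey y hy
    ext z
    simp only [Finset.mem_singleton]
    constructor
    · exact hkey z
    · rintro rfl; exact hxy ▸ hy
  obtain ⟨c, hc⟩ := hCA
  have hcC : c ∈ C := (Finset.mem_inter.1 hc).1
  have hcA : c ∈ A := (Finset.mem_inter.1 hc).2
  set G := F.filter (fun F' => c ∈ F') with hG
  have hGcard : 2 ≤ G.card := by
    rw [hA] at hcA
    simp only [Finset.mem_filter, Finset.mem_univ, true_and] at hcA
    exact hcA
  have hGsub : G ⊆ F := Finset.filter_subset _ _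
  -- choice function for private sets
  let f : Fin n → Finset (Fin n) := fun x =>
    if h : ∃ F' ∈ F, C ∩ F' = {x} then h.choose else ∅
  have hf : ∀ x ∈ C, f x ∈ F ∧ C ∩ f x = {x} := by
    intro x hx
    have h := priv x hx
    simp only [f, dif_pos h]
    exact ⟨h.choose_spec.1, h.choose_spec.2⟩
  have hmap : ∀ x ∈ C.erase c, f x ∈ F \ G := by
    intro x hx
    have hxC := Finset.mem_of_mem_erase hx
    have hxc : x ≠ c := (Finset.mem_erase.1 hx).1
    obtain ⟨h1, h2⟩ := hf x hxC
    refine Finset.mem_sdiff.2 ⟨h1, ?_⟩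
    simp only [hG, Finset.mem_filter]
    rintro ⟨-, hcf⟩
    have : c ∈ C ∩ f x := Finset.mem_inter.2 ⟨hcC, hcf⟩
    rw [h2, Finset.mem_singleton] at this
    exact hxc this.symm
  have hinj : Set.InjOn f (C.erase c) := by
    intro x hx y hy hxy
    have hxC := Finset.mem_of_mem_erase hx
    have hyC := Finset.mem_of_mem_erase hy
    have h1 := (hf x hxC).2
    have h2 := (hf y hyC).2
    rw [hxy, h2] at h1
    exact Finset.singleton_injective h1.symm
  have hcard : (C.erase c).card ≤ (F \ G).card :=
    Finset.card_le_card_of_injOn f hmap hinj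
  have h1 : (F \ G).card = F.card - G.card := by
    rw [Finset.card_sdiff, Finset.inter_eq_left.2 hGsub]
  have h2 : (C.erase c).card = C.card - 1 := Finset.card_erase_of_mem hcC
  have h3 : G.card ≤ F.card := Finset.card_le_card hGsub
  omega
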